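/- Let F be a compact subset of D = {(x,y) : |y| < x, |y| < 2-x} ⊂ ℂ, let t > 0, and let z₀ ∈ F attain min_{z∈F} Re(z²). Then for all z ∈ F, ∫₀ᵗ |∂ₓK(z, t-τ)|² dτ ≤ (1/(π (Re z₀²)²)) (1 + Re(z₀²)/(2t)) e^{-Re(z₀²)/(2t)}, where ∂ₓK(z,s) = -z/(4√π s^{3/2}) e^{-z²/(4s)}. -/

import Mathlib

open Complex MeasureTheory
open Filter

/-- The open square `D` with vertices `0, 1+i, 2, 1-i`, viewed in `ℂ`. -/
def Dsq : Set ℂ := {z : ℂ | |z.im| < z.re ∧ |z.im| < 2 - z.re}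

/-- `∂ₓK(z,s) = -z/(4√π s^{3/2}) e^{-z²/(4s)}`. -/
noncomputable def dxK (z : ℂ) (t : ℝ) : ℂ :=
  -z / (4 * Real.sqrt Real.pi * (t ^ ((3:ℝ)/2) : ℝ)) * Complex.exp (-z ^ 2 / (4 * (t : ℂ)))

lemma aux_norm (z : ℂ) {s : ℝ} (hs : 0 < s) :
    ‖dxK z s‖ ^ 2 = ‖z‖ ^ 2 / (16 * Real.pi) * (s ^ 3)⁻¹ *
      Real.exp (-((z ^ 2).re / (2 * s))) := by
  have hsp : (0:ℝ) < s ^ ((3:ℝ)/2) := Real.rpow_pos_of_pos hs _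
  have hre : (-z ^ 2 / (4 * (s : ℂ))).re = -((z ^ 2).re / (4 * s)) := by
    rw [show (4 * (s:ℂ)) = ((4 * s : ℝ) : ℂ) by push_cast; ring, Complex.div_ofReal_re]
    simp [neg_div]
  have hnorm : ‖dxK z s‖ = ‖z‖ / (4 * Real.sqrt Real.pi * s ^ ((3:ℝ)/2)) *
      Real.exp (-((z ^ 2).re / (4 * s))) := by
    rw [dxK, norm_mul, norm_div, norm_neg, Complex.norm_exp, hre]
    congr 1
    congr 1
    rw [show ((4:ℂ) * (Real.sqrt Real.pi : ℂ) * ((s ^ ((3:ℝ)/2) : ℝ) : ℂ))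
        = (((4 * Real.sqrt Real.pi * s ^ ((3:ℝ)/2) : ℝ)) : ℂ) by push_cast; ring,
      Complex.norm_real, Real.norm_eq_abs, abs_of_pos]
    positivity
  rw [hnorm, mul_pow, div_pow, mul_pow, mul_pow, sq (Real.exp _), ← Real.exp_add]
  have h1 : Real.sqrt Real.pi ^ 2 = Real.pi := Real.sq_sqrt Real.pi_nonneg
  have h2 : (s ^ ((3:ℝ)/2)) ^ 2 = s ^ 3 := by
    rw [← Real.rpow_natCast (s ^ ((3:ℝ)/2)) 2, ← Real.rpow_mul hs.le]
    norm_num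
  rw [h1, h2]
  have : -((z ^ 2).re / (4 * s)) + -((z ^ 2).re / (4 * s)) = -((z ^ 2).re / (2 * s)) := by
    field_simp; ring
  rw [this]
  norm_num
  ring

lemma aux_deriv (a C : ℝ) (ha : a ≠ 0) {s : ℝ} (hs : 0 < s) :
    HasDerivAt (fun s : ℝ => C * (4 / a ^ 2) * ((1 + a / (2 * s)) * Real.exp (-(a / (2 * s)))))
      (C * (s ^ 3)⁻¹ * Real.exp (-(a / (2 * s)))) s := by
  have hs0 : s ≠ 0 := hs.ne'
  have hu : HasDerivAt (fun s : ℝ => a / (2 * s)) (-(a / 2) / s ^ 2) s := by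
    have h := (hasDerivAt_inv hs0).const_mul (a / 2)
    have hfe : (fun s : ℝ => a / (2 * s)) = fun y : ℝ => a / 2 * y⁻¹ := by
      funext y; rw [div_eq_mul_inv, div_eq_mul_inv, mul_inv]; ring
    rw [hfe]
    exact h.congr_deriv (by ring)
  have hexp : HasDerivAt (fun s : ℝ => Real.exp (-(a / (2 * s))))
      (Real.exp (-(a / (2 * s))) * -(-(a / 2) / s ^ 2)) s := (hu.neg).exp
  have hprod := ((hasDerivAt_const s (1:ℝ)).add hu).mul hexp
  have := hprod.const_mul (C * (4 / a ^ 2))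
  refine (this.congr_deriv ?_).congr_of_eventuallyEq (Filter.Eventually.of_forall fun y => rfl)
  simp only [Pi.add_apply]
  field_simp
  ring

lemma aux_mono {x₀ x : ℝ} (h0 : 0 ≤ x₀) (h : x₀ ≤ x) :
    (1 + x) * Real.exp (-x) ≤ (1 + x₀) * Real.exp (-x₀) := by
  rw [Real.exp_neg, Real.exp_neg, ← div_eq_mul_inv, ← div_eq_mul_inv,
    div_le_div_iff₀ (Real.exp_pos _) (Real.exp_pos _)]
  have hkey := Real.add_one_le_exp (x - x₀)
  have hx : Real.exp x = Real.exp x₀ * Real.exp (x - x₀) := by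
    rw [← Real.exp_add]; ring_nf
  have h1 : (1 + x₀) * Real.exp x₀ * (x - x₀ + 1) ≤ (1 + x₀) * Real.exp x₀ * Real.exp (x - x₀) :=
    mul_le_mul_of_nonneg_left hkey (by positivity)
  nlinarith [mul_nonneg (mul_nonneg h0 (sub_nonneg.mpr h)) (Real.exp_pos x₀).le]

lemma aux_tendsto (a t : ℝ) (ha : 0 < a) (ht : 0 < t) :
    Tendsto (fun n : ℕ => (1 + a / (2 * (t / (n + 2)))) * Real.exp (-(a / (2 * (t / (n + 2))))))
      atTop (nhds 0) := by
  have hg : Tendsto (fun u : ℝ => (1 + u) * Real.exp (-u)) atTop (nhds 0) := by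
    have h1 := Real.tendsto_exp_neg_atTop_nhds_zero
    have h2 := Real.tendsto_pow_mul_exp_neg_atTop_nhds_zero 1
    have := h1.add h2
    simp only [add_zero] at this
    refine this.congr fun u => ?_
    simp [add_mul, Real.exp_neg]
  have hu : Tendsto (fun n : ℕ => a / (2 * (t / (n + 2)))) atTop atTop := by
    have h1 : Tendsto (fun n : ℕ => ((n : ℝ) + 2)) atTop atTop :=
      tendsto_atTop_add_const_right _ 2 tendsto_natCast_atTop_atTop
    have h2 : Tendsto (fun n : ℕ => a * ((n : ℝ) + 2) / (2 * t)) atTop atTop :=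
      (h1.const_mul_atTop ha).atTop_div_const (by positivity)
    refine h2.congr fun n => ?_
    have hn : ((n : ℝ) + 2) ≠ 0 := by positivity
    field_simp
  exact (hg.comp hu).congr fun n => rfl

/-- For a compact `F ⊆ D`, `t > 0` and `z₀ ∈ F` minimizing `Re(z²)` over `F`, for all `z ∈ F`:
`∫₀ᵗ |∂ₓK(z, t-τ)|² dτ ≤ (1/(π (Re z₀²)²))(1 + Re(z₀²)/(2t)) e^{-Re(z₀²)/(2t)}`. -/
theorem integral_sq_bound_on_compact (F : Set ℂ) (hF : IsCompact F) (hFD : F ⊆ Dsq)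
    (t : ℝ) (ht : 0 < t) (z₀ : ℂ) (hz₀ : z₀ ∈ F)
    (hmin : ∀ z ∈ F, (z₀ ^ 2).re ≤ (z ^ 2).re) :
    ∀ z ∈ F,
      ∫ τ in Set.Ioo (0:ℝ) t, ‖dxK z (t - τ)‖ ^ 2 ≤
        (1 / (Real.pi * ((z₀ ^ 2).re) ^ 2)) * (1 + (z₀ ^ 2).re / (2 * t)) *
          Real.exp (-(z₀ ^ 2).re / (2 * t)) := by
  intro z hz
  obtain ⟨h1₀, h2₀⟩ := hFD hz₀
  obtain ⟨h1, h2⟩ := hFD hz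
  have hre2 : ∀ w : ℂ, (w ^ 2).re = w.re ^ 2 - w.im ^ 2 := fun w => by
    rw [sq, Complex.mul_re]; ring
  set a₀ := (z₀ ^ 2).re with ha₀def
  set a := (z ^ 2).re with hadef
  have ha₀ : 0 < a₀ := by
    rw [ha₀def, hre2]
    obtain ⟨hl, hr⟩ := abs_lt.mp h1₀
    nlinarith
  have haa : a₀ ≤ a := hmin z hz
  have ha : 0 < a := lt_of_lt_of_le ha₀ haa
  have hπ := Real.pi_pos
  have hz4 : ‖z‖ ^ 2 ≤ 4 := by
    have hsq : ‖z‖ ^ 2 = z.re ^ 2 + z.im ^ 2 := by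
      rw [Complex.sq_norm, Complex.normSq_apply]; ring
    obtain ⟨hl1, hr1⟩ := abs_lt.mp h1
    obtain ⟨hl2, hr2⟩ := abs_lt.mp h2
    nlinarith
  set C := ‖z‖ ^ 2 / (16 * Real.pi) with hCdef
  have hC : 0 ≤ C := by positivity
  set g : ℝ → ℝ := fun s => C * (s ^ 3)⁻¹ * Real.exp (-(a / (2 * s))) with hgdef
  set Φ : ℝ → ℝ := fun s => C * (4 / a ^ 2) * ((1 + a / (2 * s)) * Real.exp (-(a / (2 * s))))
    with hΦdef
  -- Step 1: rewrite the integrand and reflect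
  have step1 : (∫ τ in Set.Ioo (0:ℝ) t, ‖dxK z (t - τ)‖ ^ 2) = ∫ s in Set.Ioo (0:ℝ) t, g s := by
    rw [show (∫ τ in Set.Ioo (0:ℝ) t, ‖dxK z (t - τ)‖ ^ 2)
        = ∫ τ in Set.Ioo (0:ℝ) t, g (t - τ) from
      setIntegral_congr_fun measurableSet_Ioo (fun τ hτ => by
        rw [aux_norm z (by linarith [hτ.2] : (0:ℝ) < t - τ)])]
    rw [← integral_Ioc_eq_integral_Ioo, ← intervalIntegral.integral_of_le ht.le,
      intervalIntegral.integral_comp_sub_left g t]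
    simp only [sub_self, sub_zero]
    rw [intervalIntegral.integral_of_le ht.le, integral_Ioc_eq_integral_Ioo]
  -- Step 2: compute the improper integral via an AECover
  have hcov : AECover (volume.restrict (Set.Ioo (0:ℝ) t)) atTop
      (fun n : ℕ => Set.Ioo (t / (n + 2)) t) := by
    refine aecover_Ioo_of_Ioo ?_ tendsto_const_nhds
    have h1 : Tendsto (fun n : ℕ => ((n : ℝ) + 2)) atTop atTop :=
      tendsto_atTop_add_const_right _ 2 tendsto_natCast_atTop_atTop
    exact tendsto_const_nhds.div_atTop h1
  have hεpos : ∀ n : ℕ, 0 < t / ((n : ℝ) + 2) := fun n => by positivity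
  have hεle : ∀ n : ℕ, t / ((n : ℝ) + 2) ≤ t := fun n =>
    div_le_self ht.le (by linarith [Nat.cast_nonneg (α := ℝ) n])
  have hcont : ∀ n : ℕ, ContinuousOn g (Set.Icc (t / ((n : ℝ) + 2)) t) := by
    intro n
    have hpos : ∀ x ∈ Set.Icc (t / ((n : ℝ) + 2)) t, 0 < x :=
      fun x hx => lt_of_lt_of_le (hεpos n) hx.1
    apply ContinuousOn.mul
    · exact continuousOn_const.mul ((continuousOn_id.pow 3).inv₀
        fun x hx => pow_ne_zero 3 (hpos x hx).ne')
    · exact Real.continuous_exp.comp_continuousOn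
        ((continuousOn_const.div (continuousOn_const.mul continuousOn_id)
          fun x hx => mul_ne_zero two_ne_zero (hpos x hx).ne').neg)
  have hftc : ∀ n : ℕ, (∫ s in Set.Ioo (t / ((n : ℝ) + 2)) t, g s) = Φ t - Φ (t / ((n : ℝ) + 2)) := by
    intro n
    rw [← integral_Ioc_eq_integral_Ioo, ← intervalIntegral.integral_of_le (hεle n)]
    apply intervalIntegral.integral_eq_sub_of_hasDerivAt
    · intro x hx
      rw [Set.uIcc_of_le (hεle n)] at hx
      exact aux_deriv a C ha.ne' (lt_of_lt_of_le (hεpos n) hx.1)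
    · apply ContinuousOn.intervalIntegrable
      rw [Set.uIcc_of_le (hεle n)]
      exact hcont n
  have hsub : ∀ n : ℕ, Set.Ioo (t / ((n : ℝ) + 2)) t ⊆ Set.Ioo (0:ℝ) t :=
    fun n x hx => ⟨lt_trans (hεpos n) hx.1, hx.2⟩
  have hieq : ∀ n : ℕ, (∫ s in Set.Ioo (t / ((n : ℝ) + 2)) t, g s ∂(volume.restrict (Set.Ioo (0:ℝ) t)))
      = ∫ s in Set.Ioo (t / ((n : ℝ) + 2)) t, g s := by
    intro n
    rw [Measure.restrict_restrict measurableSet_Ioo,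
      Set.inter_eq_self_of_subset_left (hsub n)]
  have hint : ∀ n : ℕ, IntegrableOn g (Set.Ioo (t / ((n : ℝ) + 2)) t)
      (volume.restrict (Set.Ioo (0:ℝ) t)) := by
    intro n
    have hI : IntegrableOn g (Set.Ioo (t / ((n : ℝ) + 2)) t) volume :=
      ((hcont n).integrableOn_Icc).mono_set Set.Ioo_subset_Icc_self
    have hle : (volume.restrict (Set.Ioo (0:ℝ) t)).restrict (Set.Ioo (t / ((n : ℝ) + 2)) t)
        ≤ volume.restrict (Set.Ioo (t / ((n : ℝ) + 2)) t) := by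
      rw [Measure.restrict_restrict measurableSet_Ioo]
      exact Measure.restrict_mono Set.inter_subset_left le_rfl
    exact Integrable.mono_measure hI hle
  have htend : Tendsto (fun n : ℕ =>
      ∫ s in Set.Ioo (t / ((n : ℝ) + 2)) t, g s ∂(volume.restrict (Set.Ioo (0:ℝ) t)))
      atTop (nhds (Φ t)) := by
    simp only [hieq, hftc]
    have h0 := (aux_tendsto a t ha ht).const_mul (C * (4 / a ^ 2))
    have := (tendsto_const_nhds (x := Φ t) (f := atTop (α := ℕ))).sub h0
    simpa using this
  have hnn : 0 ≤ᵐ[volume.restrict (Set.Ioo (0:ℝ) t)] g := by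
    filter_upwards [ae_restrict_mem measurableSet_Ioo] with x hx
    have hx0 : 0 < x := hx.1
    positivity
  have step2 : (∫ s in Set.Ioo (0:ℝ) t, g s) = Φ t :=
    hcov.integral_eq_of_tendsto_of_nonneg_ae (Φ t) hnn hint htend
  -- Step 3: the final bound
  rw [step1, step2]
  have hx₀ : (0:ℝ) ≤ a₀ / (2 * t) := by positivity
  have hxx : a₀ / (2 * t) ≤ a / (2 * t) := by gcongr
  have e1 : (1 + a / (2 * t)) * Real.exp (-(a / (2 * t)))
      ≤ (1 + a₀ / (2 * t)) * Real.exp (-(a₀ / (2 * t))) := aux_mono hx₀ hxx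
  have e2 : C * (4 / a ^ 2) ≤ 1 / (Real.pi * a₀ ^ 2) := by
    have key : ‖z‖ ^ 2 / (16 * Real.pi) * (4 / a ^ 2) = ‖z‖ ^ 2 / (4 * Real.pi * a ^ 2) := by
      field_simp
      ring
    rw [hCdef, key, div_le_div_iff₀ (by positivity) (by positivity)]
    have ha2 : a₀ ^ 2 ≤ a ^ 2 := pow_le_pow_left₀ ha₀.le haa 2
    nlinarith [mul_le_mul hz4 ha2 (sq_nonneg a₀) (by norm_num : (0:ℝ) ≤ 4)]
  calc Φ t ≤ C * (4 / a ^ 2) * ((1 + a₀ / (2 * t)) * Real.exp (-(a₀ / (2 * t)))) := by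
        exact mul_le_mul_of_nonneg_left e1 (by positivity)
    _ ≤ 1 / (Real.pi * a₀ ^ 2) * ((1 + a₀ / (2 * t)) * Real.exp (-(a₀ / (2 * t)))) := by
        apply mul_le_mul_of_nonneg_right e2
        positivity
    _ = 1 / (Real.pi * a₀ ^ 2) * (1 + a₀ / (2 * t)) * Real.exp (-a₀ / (2 * t)) := by
        rw [neg_div]; ring
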